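/- Let n ≥ 1. The complex vector space {(X_i)_{i∈ℤ/2nℤ} : each X_i is a 2n×2n complex matrix, τ₁X_i = X_{i+1}τ₁ for all i ∈ ℤ/2nℤ, and X_i = Ω·X_{−i}ᵀ·Ω for all i ∈ ℤ/2nℤ} has dimension 2n² + n over ℂ. (This space is the Lie algebra of the symplectic automorphism group G^{sp}; consequently dim G^{sp} = 2n² + n.) -/

import Mathlib

open Matrix

/-- The Gram matrix Ω of the symplectic form: Ω_{s,t} = (−1)^{s+1} if s+t = 2n+1
(1-indexed) and 0 otherwise. -/
noncomputable def Omega (n : ℕ) : Matrix (Fin (2*n)) (Fin (2*n)) ℂ :=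
  Matrix.of fun s t =>
    if ((s : ℕ) + 1) + ((t : ℕ) + 1) = 2*n + 1 then (-1 : ℂ)^((s : ℕ) + 1 + 1) else 0

/-- The matrix of the shift map τ₁ : e_j ↦ e_{j+1} (1 ≤ j ≤ 2n−1), e_{2n} ↦ 0. -/
noncomputable def tauMat (n : ℕ) : Matrix (Fin (2*n)) (Fin (2*n)) ℂ :=
  Matrix.of fun s t => if (s : ℕ) = (t : ℕ) + 1 then 1 else 0

/-- The Lie algebra of the symplectic automorphism group G^{sp}: tuples
(X_i)_{i ∈ ℤ/2nℤ} of 2n×2n matrices with τ₁X_i = X_{i+1}τ₁ and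
X_i = Ω·X_{−i}ᵀ·Ω for all i. -/
noncomputable def sympLie (n : ℕ) :
    Submodule ℂ (ZMod (2*n) → Matrix (Fin (2*n)) (Fin (2*n)) ℂ) where
  carrier := {X | (∀ i, tauMat n * X i = X (i + 1) * tauMat n) ∧
                  (∀ i, X i = Omega n * (X (-i))ᵀ * Omega n)}
  zero_mem' := by
    constructor <;> intro i <;> simp
  add_mem' := by
    rintro X Y ⟨hX1, hX2⟩ ⟨hY1, hY2⟩
    constructor <;> intro i
    · simp only [Pi.add_apply, Matrix.mul_add, Matrix.add_mul, hX1 i, hY1 i]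
    · simp only [Pi.add_apply, Matrix.transpose_add, Matrix.mul_add, Matrix.add_mul]
      rw [← hX2 i, ← hY2 i]
  smul_mem' := by
    rintro c X ⟨hX1, hX2⟩
    constructor <;> intro i
    · simp only [Pi.smul_apply, Matrix.mul_smul, Matrix.smul_mul, hX1 i]
    · simp only [Pi.smul_apply, Matrix.transpose_smul, Matrix.mul_smul, Matrix.smul_mul]
      rw [← hX2 i]

/-! ### Auxiliary development -/

section Aux

/-- The data space: functions (j, r) ↦ a_j(r). -/
abbrev Amod (n : ℕ) := (ZMod (2*n) × Fin (2*n)) → ℂ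

noncomputable def Ssub (n : ℕ) : Submodule ℂ (Amod n) where
  carrier := {a | ∀ (j : ZMod (2*n)) (r : Fin (2*n)),
    a (j, r) = (-1 : ℂ)^((r : ℕ)+1) * a (((r : ℕ) : ZMod (2*n)) + 1 - j, r)}
  zero_mem' := by intro j r; simp
  add_mem' := by
    intro a b ha hb j r
    simp only [Pi.add_apply, ha j r, hb j r]; ring
  smul_mem' := by
    intro c a ha j r
    simp only [Pi.smul_apply, smul_eq_mul, ha j r]; ring

lemma mem_Ssub_iff (n : ℕ) (a : Amod n) : a ∈ Ssub n ↔ ∀ (j : ZMod (2*n)) (r : Fin (2*n)),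
    a (j, r) = (-1 : ℂ)^((r : ℕ)+1) * a (((r : ℕ) : ZMod (2*n)) + 1 - j, r) := Iff.rfl

noncomputable def Pproj (n : ℕ) : Amod n →ₗ[ℂ] Amod n where
  toFun a := fun p =>
    (a p + (-1 : ℂ)^((p.2 : ℕ)+1) * a (((p.2 : ℕ) : ZMod (2*n)) + 1 - p.1, p.2)) / 2
  map_add' := by intro a b; funext p; simp only [Pi.add_apply]; ring
  map_smul' := by intro c a; funext p; simp only [Pi.smul_apply, smul_eq_mul,
    RingHom.id_apply]; ring

lemma Pproj_apply (n : ℕ) (a : Amod n) (p : ZMod (2*n) × Fin (2*n)) :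
    Pproj n a p = (a p + (-1 : ℂ)^((p.2 : ℕ)+1)
      * a (((p.2 : ℕ) : ZMod (2*n)) + 1 - p.1, p.2)) / 2 := rfl

lemma sq_sign (r : ℕ) : (-1 : ℂ)^(r+1) * (-1 : ℂ)^(r+1) = 1 := by
  rw [← pow_add]
  exact Even.neg_one_pow ⟨r+1, rfl⟩

lemma isProj_Pproj (n : ℕ) : LinearMap.IsProj (Ssub n) (Pproj n) := by
  constructor
  · intro a
    rw [mem_Ssub_iff]
    intro j r
    rw [Pproj_apply, Pproj_apply]
    have h2 : ((r : ℕ) : ZMod (2*n)) + 1 - (((r : ℕ) : ZMod (2*n)) + 1 - j) = j := by ring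
    simp only [h2]
    have hs := sq_sign (r : ℕ)
    linear_combination (-(a (j, r)) / 2) * hs
  · intro a ha
    funext p
    obtain ⟨j, r⟩ := p
    rw [Pproj_apply]
    rw [← (mem_Ssub_iff n a).1 ha j r]
    ring

lemma innerSumS (n : ℕ) (hn : 1 ≤ n) [NeZero (2*n)] (j : ZMod (2*n)) :
    ∑ r : Fin (2*n), (-1:ℂ)^((r:ℕ)+1)
      * (if ((r:ℕ) : ZMod (2*n)) + 1 - j = j then (1:ℂ) else 0) / 2 = 1/2 := by
  set c : ZMod (2*n) := 2*j - 1 with hc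
  have hcv : ((c.val : ℕ) : ZMod (2*n)) = c := ZMod.natCast_rightInverse c
  set r0 : Fin (2*n) := ⟨c.val, c.val_lt⟩ with hr0
  have hcond : ∀ r : Fin (2*n), (((r:ℕ) : ZMod (2*n)) + 1 - j = j) ↔ r = r0 := by
    intro r
    constructor
    · intro h
      have h2 : ((r:ℕ) : ZMod (2*n)) = c := by rw [hc]; linear_combination h
      have h3 : (r : ℕ) = c.val := by
        have := ZMod.val_cast_of_lt r.2
        rw [h2] at this; omega
      exact Fin.ext h3
    · intro h
      subst h
      show ((c.val : ℕ) : ZMod (2*n)) + 1 - j = j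
      rw [hcv, hc]; ring
  have hpar : Even (c.val + 1) := by
    have h1 : ((c.val + 1 : ℕ) : ZMod (2*n)) = ((2 * j.val : ℕ) : ZMod (2*n)) := by
      push_cast
      rw [hcv, ZMod.natCast_rightInverse j, hc]; ring
    have h2 := (ZMod.natCast_eq_natCast_iff _ _ _).1 h1
    have h3 := h2.of_dvd ⟨n, rfl⟩
    have h4 : (c.val + 1) % 2 = (2 * j.val) % 2 := h3
    rw [Nat.even_iff]; omega
  calc ∑ r : Fin (2*n), (-1:ℂ)^((r:ℕ)+1)
      * (if ((r:ℕ) : ZMod (2*n)) + 1 - j = j then (1:ℂ) else 0) / 2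
      = ∑ r : Fin (2*n), (if r = r0 then (-1:ℂ)^((r:ℕ)+1)/2 else 0) := by
        apply Finset.sum_congr rfl
        intro r _
        by_cases h : r = r0
        · have hco := (hcond r).2 h
          rw [if_pos hco, if_pos h, mul_one]
        · rw [if_neg (mt (hcond r).1 h), if_neg h]
          simp
    _ = (-1:ℂ)^((r0:ℕ)+1)/2 := by rw [Finset.sum_ite_eq' Finset.univ r0]; simp
    _ = 1/2 := by rw [show ((r0:ℕ)) = c.val from rfl, hpar.neg_one_pow]

lemma finrank_Ssub (n : ℕ) (hn : 1 ≤ n) : Module.finrank ℂ ↥(Ssub n) = 2*n^2 + n := by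
  haveI : NeZero (2*n) := ⟨by omega⟩
  have htr := (isProj_Pproj n).trace
  have hcalc : LinearMap.trace ℂ (Amod n) (Pproj n) = ((2*n^2 + n : ℕ) : ℂ) := by
    classical
    rw [LinearMap.trace_eq_matrix_trace ℂ (Pi.basisFun ℂ (ZMod (2*n) × Fin (2*n))) (Pproj n),
      Matrix.trace]
    have hdiag : ∀ p : ZMod (2*n) × Fin (2*n),
        ((LinearMap.toMatrix (Pi.basisFun ℂ _) (Pi.basisFun ℂ _) (Pproj n)).diag) p
        = 1/2 + (-1:ℂ)^((p.2:ℕ)+1)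
            * (if ((p.2:ℕ) : ZMod (2*n)) + 1 - p.1 = p.1 then (1:ℂ) else 0) / 2 := by
      rintro ⟨j, r⟩
      simp only [Matrix.diag, LinearMap.toMatrix_apply, Pi.basisFun_repr, Pi.basisFun_apply]
      rw [Pproj_apply]
      simp only [Pi.single_eq_same, Pi.single_apply, Prod.mk.injEq, and_true]
      ring
    rw [Finset.sum_congr rfl (fun p _ => hdiag p)]
    rw [Finset.sum_add_distrib, Finset.sum_const, Finset.card_univ, Fintype.card_prod,
      ZMod.card, Fintype.card_fin, Fintype.sum_prod_type]
    rw [Finset.sum_congr rfl (fun j _ => innerSumS n hn j)]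
    rw [Finset.sum_const, Finset.card_univ, ZMod.card]
    push_cast
    ring
  rw [hcalc] at htr
  exact_mod_cast htr.symm

/-! matrix-side lemmas -/

/-- reversal of indices -/
def rev {n : ℕ} (s : Fin (2*n)) : Fin (2*n) := ⟨2*n - 1 - (s:ℕ), by have := s.2; omega⟩

lemma tau_mul_entry {n : ℕ} (M : Matrix (Fin (2*n)) (Fin (2*n)) ℂ) (s t : Fin (2*n)) :
    (tauMat n * M) s t = if h : 0 < (s:ℕ) then M ⟨(s:ℕ)-1, by have := s.2; omega⟩ t else 0 := by
  rw [Matrix.mul_apply]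
  split
  · next h =>
    rw [Finset.sum_eq_single (⟨(s:ℕ)-1, by have := s.2; omega⟩ : Fin (2*n))]
    · simp only [tauMat, Matrix.of_apply]
      have hc : (s:ℕ) = (s:ℕ) - 1 + 1 := by omega
      rw [if_pos hc, one_mul]
    · intro b _ hb
      simp only [tauMat, Matrix.of_apply]
      rw [if_neg, zero_mul]
      intro hsb
      exact hb (Fin.ext (by simp at hsb ⊢; omega))
    · intro h; exact absurd (Finset.mem_univ _) h
  · next h =>
    apply Finset.sum_eq_zero
    intro k _
    simp only [tauMat, Matrix.of_apply]
    rw [if_neg (by omega), zero_mul]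

lemma mul_tau_entry {n : ℕ} (M : Matrix (Fin (2*n)) (Fin (2*n)) ℂ) (s t : Fin (2*n)) :
    (M * tauMat n) s t = if h : (t:ℕ)+1 < 2*n then M s ⟨(t:ℕ)+1, h⟩ else 0 := by
  rw [Matrix.mul_apply]
  split
  · next h =>
    rw [Finset.sum_eq_single (⟨(t:ℕ)+1, h⟩ : Fin (2*n))]
    · simp only [tauMat, Matrix.of_apply]
      rw [if_pos (by simp), mul_one]
    · intro b _ hb
      simp only [tauMat, Matrix.of_apply]
      rw [if_neg, mul_zero]
      intro hsb
      exact hb (Fin.ext (by simp at hsb ⊢; omega))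
    · intro h2; exact absurd (Finset.mem_univ _) h2
  · next h =>
    apply Finset.sum_eq_zero
    intro k _
    simp only [tauMat, Matrix.of_apply]
    rw [if_neg (by have := k.2; omega), mul_zero]

lemma Omega_apply {n : ℕ} (s t : Fin (2*n)) :
    Omega n s t = if t = rev s then (-1 : ℂ)^(s:ℕ) else 0 := by
  simp only [Omega, Matrix.of_apply]
  have h2 : (-1 : ℂ)^((s:ℕ)+1+1) = (-1:ℂ)^(s:ℕ) := by
    rw [pow_succ, pow_succ]; ring
  by_cases h : (t : ℕ) = 2*n - 1 - (s:ℕ)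
  · rw [if_pos (by have := s.2; have := t.2; omega), if_pos (Fin.ext h), h2]
  · rw [if_neg (by have := s.2; have := t.2; omega), if_neg (fun hh => h (by rw [hh]; rfl))]

lemma neg_one_pow_congr' {a b : ℕ} (h : a % 2 = b % 2) : ((-1:ℂ))^a = (-1)^b := by
  conv_lhs => rw [← Nat.div_add_mod a 2]
  conv_rhs => rw [← Nat.div_add_mod b 2]
  rw [pow_add, pow_add, pow_mul, pow_mul]
  norm_num [h]

lemma conjOmega_entry {n : ℕ} (M : Matrix (Fin (2*n)) (Fin (2*n)) ℂ) (s t : Fin (2*n)) :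
    (Omega n * Mᵀ * Omega n) s t = (-1:ℂ)^((s:ℕ)+(t:ℕ)+1) * M (rev t) (rev s) := by
  rw [Matrix.mul_apply]
  rw [Finset.sum_eq_single (rev t)]
  · rw [Matrix.mul_apply, Finset.sum_eq_single (rev s)]
    · rw [Omega_apply, Omega_apply, if_pos rfl, if_pos]
      · rw [Matrix.transpose_apply]
        have hs := s.2; have ht := t.2
        rw [show ((rev t : Fin (2*n)) : ℕ) = 2*n-1-(t:ℕ) from rfl]
        have hsgn : (-1:ℂ)^(s:ℕ) * (-1:ℂ)^(2*n-1-(t:ℕ)) = (-1:ℂ)^((s:ℕ)+(t:ℕ)+1) := by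
          rw [← pow_add]; exact neg_one_pow_congr' (by omega)
        linear_combination M (rev t) (rev s) * hsgn
      · apply Fin.ext
        show (t:ℕ) = 2*n-1-(2*n-1-(t:ℕ))
        have := t.2; omega
    · intro b _ hb
      rw [Omega_apply, if_neg hb, zero_mul]
    · intro h; exact absurd (Finset.mem_univ _) h
  · intro b _ hb
    rw [Omega_apply (s := b), if_neg, mul_zero]
    intro hh
    apply hb
    apply Fin.ext
    have hb2 := b.2; have ht := t.2
    have h3 : (t:ℕ) = 2*n-1-(b:ℕ) := congrArg Fin.val hh
    show (b:ℕ) = 2*n-1-(t:ℕ)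
    omega
  · intro h; exact absurd (Finset.mem_univ _) h

lemma fund {n : ℕ} (X : ZMod (2*n) → Matrix (Fin (2*n)) (Fin (2*n)) ℂ)
    (h1 : ∀ i, tauMat n * X i = X (i+1) * tauMat n) (i : ZMod (2*n)) (s t : Fin (2*n)) :
    X i s t = if h : (t:ℕ) ≤ (s:ℕ) then
      X (i - ((t:ℕ) : ZMod (2*n))) ⟨(s:ℕ)-(t:ℕ), by have := s.2; omega⟩ ⟨0, by have := s.2; omega⟩
    else 0 := by
  suffices H : ∀ m : ℕ, ∀ (i : ZMod (2*n)) (s t : Fin (2*n)), (t:ℕ) = m →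
      X i s t = if h : (t:ℕ) ≤ (s:ℕ) then
        X (i - ((t:ℕ) : ZMod (2*n))) ⟨(s:ℕ)-(t:ℕ), by have := s.2; omega⟩ ⟨0, by have := s.2; omega⟩
      else 0 from H (t:ℕ) i s t rfl
  intro m
  induction m with
  | zero =>
    intro i s t htt
    rw [dif_pos (by omega)]
    have h0 : ((t:ℕ) : ZMod (2*n)) = 0 := by rw [htt]; simp
    rw [h0, sub_zero]
    congr 1
    · exact Fin.ext (show (s:ℕ) = (s:ℕ)-(t:ℕ) by omega)
    · exact Fin.ext (show (t:ℕ) = 0 by omega)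
  | succ m IH =>
    intro i s t htt
    have ht1 : 0 < (t:ℕ) := by omega
    have htlt := t.2
    have hstep : X i s t = (X i * tauMat n) s ⟨(t:ℕ)-1, by omega⟩ := by
      rw [mul_tau_entry, dif_pos (show (t:ℕ)-1+1 < 2*n by omega)]
      congr 1
      exact Fin.ext (by simp only []; omega)
    have hcomm : X i * tauMat n = tauMat n * X (i - 1) := by
      have h := h1 (i - 1)
      rw [sub_add_cancel] at h
      exact h.symm
    rw [hstep, hcomm, tau_mul_entry]
    have hcast : (((t:ℕ)-1 : ℕ) : ZMod (2*n)) = ((t:ℕ) : ZMod (2*n)) - 1 := by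
      rw [Nat.cast_sub ht1]; simp
    by_cases hs : 0 < (s:ℕ)
    · rw [dif_pos hs]
      rw [IH (i-1) ⟨(s:ℕ)-1, by have := s.2; omega⟩ ⟨(t:ℕ)-1, by omega⟩ (by simp only []; omega)]
      by_cases hts : (t:ℕ) ≤ (s:ℕ)
      · rw [dif_pos (show (((⟨(t:ℕ)-1, by omega⟩ : Fin (2*n))):ℕ) ≤
            (((⟨(s:ℕ)-1, by have := s.2; omega⟩ : Fin (2*n))):ℕ) by simp only []; omega),
          dif_pos hts]
        congr 1
        · rw [show (((⟨(t:ℕ)-1, by omega⟩ : Fin (2*n)) : ℕ) : ZMod (2*n))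
            = ((t:ℕ) : ZMod (2*n)) - 1 from hcast]
          ring
        · exact Fin.ext (by simp only []; omega)
      · rw [dif_neg (by simp only []; omega), dif_neg hts]
    · rw [dif_neg hs, dif_neg (by omega : ¬ (t:ℕ) ≤ (s:ℕ))]

/-! The linear equivalence -/

noncomputable def toA (n : ℕ) (hn : 1 ≤ n) :
    (ZMod (2*n) → Matrix (Fin (2*n)) (Fin (2*n)) ℂ) →ₗ[ℂ] Amod n where
  toFun X := fun p => X p.1 p.2 ⟨0, by omega⟩
  map_add' := by intro X Y; funext p; simp
  map_smul' := by intro c X; funext p; simp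

lemma toA_apply (n : ℕ) (hn : 1 ≤ n) (X : ZMod (2*n) → Matrix (Fin (2*n)) (Fin (2*n)) ℂ)
    (p : ZMod (2*n) × Fin (2*n)) : toA n hn X p = X p.1 p.2 ⟨0, by omega⟩ := rfl

noncomputable def fromA (n : ℕ) :
    Amod n →ₗ[ℂ] (ZMod (2*n) → Matrix (Fin (2*n)) (Fin (2*n)) ℂ) where
  toFun a := fun i => Matrix.of fun s t => if h : (t:ℕ) ≤ (s:ℕ) then
      a (i - ((t:ℕ) : ZMod (2*n)), ⟨(s:ℕ)-(t:ℕ), by have := s.2; omega⟩) else 0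
  map_add' := by
    intro a b; funext i; ext s t
    simp only [Matrix.of_apply, Pi.add_apply, Matrix.add_apply]
    split <;> simp
  map_smul' := by
    intro c a; funext i; ext s t
    simp only [Matrix.of_apply, Pi.smul_apply, Matrix.smul_apply, RingHom.id_apply,
      smul_eq_mul]
    split <;> simp

lemma fromA_apply (n : ℕ) (a : Amod n) (i : ZMod (2*n)) (s t : Fin (2*n)) :
    fromA n a i s t = if h : (t:ℕ) ≤ (s:ℕ) then
      a (i - ((t:ℕ) : ZMod (2*n)), ⟨(s:ℕ)-(t:ℕ), by have := s.2; omega⟩) else 0 := rfl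

lemma cast_revval {n : ℕ} (s : Fin (2*n)) :
    ((2*n - 1 - (s:ℕ) : ℕ) : ZMod (2*n)) = -1 - ((s:ℕ) : ZMod (2*n)) := by
  have hs := s.2
  rw [Nat.cast_sub (by omega), Nat.cast_sub (by omega)]
  simp [ZMod.natCast_self]

lemma fromA_mem (n : ℕ) (a : Amod n) (ha : a ∈ Ssub n) : fromA n a ∈ sympLie n := by
  constructor
  · intro i
    ext s t
    rw [tau_mul_entry, mul_tau_entry]
    by_cases h : (t:ℕ)+1 ≤ (s:ℕ)
    · have hs := s.2
      rw [dif_pos (by omega : 0 < (s:ℕ)), dif_pos (by omega : (t:ℕ)+1 < 2*n)]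
      rw [fromA_apply, fromA_apply]
      rw [dif_pos (show (t:ℕ) ≤ (((⟨(s:ℕ)-1, _⟩ : Fin (2*n))):ℕ) by simp only []; omega),
        dif_pos (show (((⟨(t:ℕ)+1, _⟩ : Fin (2*n))):ℕ) ≤ (s:ℕ) by simp only []; omega)]
      congr 2
      · rw [show (((⟨(t:ℕ)+1, _⟩ : Fin (2*n)) : ℕ) : ZMod (2*n))
          = ((t:ℕ) : ZMod (2*n)) + 1 from by push_cast; ring]
        ring
      · exact Fin.ext (by simp only []; omega)
    · have hs := s.2; have ht := t.2
      rw [show (if h : 0 < (s:ℕ) then fromA n a i ⟨(s:ℕ)-1, by omega⟩ t else 0) = 0 from ?_,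
        show (if h : (t:ℕ)+1 < 2*n then fromA n a (i+1) s ⟨(t:ℕ)+1, h⟩ else 0) = 0 from ?_]
      · split
        · rw [fromA_apply, dif_neg (by simp only []; omega)]
        · rfl
      · split
        · rw [fromA_apply, dif_neg (by simp only []; omega)]
        · rfl
  · intro i
    ext s t
    rw [conjOmega_entry, fromA_apply, fromA_apply]
    have hs := s.2; have ht := t.2
    by_cases hts : (t:ℕ) ≤ (s:ℕ)
    · rw [dif_pos hts,
        dif_pos (show (((rev s : Fin (2*n))):ℕ) ≤ (((rev t : Fin (2*n))):ℕ) by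
          show 2*n-1-(s:ℕ) ≤ 2*n-1-(t:ℕ); omega)]
      have key := (mem_Ssub_iff n a).1 ha (i - ((t:ℕ) : ZMod (2*n)))
        ⟨(s:ℕ)-(t:ℕ), by omega⟩
      have harg : ((((s:ℕ)-(t:ℕ) : ℕ) : ZMod (2*n)) + 1 - (i - ((t:ℕ) : ZMod (2*n))))
          = -i - (((((rev s : Fin (2*n))):ℕ)) : ZMod (2*n)) := by
        rw [show (((rev s : Fin (2*n))):ℕ) = 2*n-1-(s:ℕ) from rfl, cast_revval s,
          Nat.cast_sub hts]
        push_cast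
        ring
      rw [key, harg]
      have hfin : (⟨(s:ℕ)-(t:ℕ), by omega⟩ : Fin (2*n))
          = ⟨(((rev t : Fin (2*n))):ℕ) - (((rev s : Fin (2*n))):ℕ), by
              show 2*n-1-(t:ℕ) - (2*n-1-(s:ℕ)) < 2*n; omega⟩ := by
        apply Fin.ext
        show (s:ℕ)-(t:ℕ) = 2*n-1-(t:ℕ) - (2*n-1-(s:ℕ))
        omega
      rw [hfin]
      congr 1
      apply neg_one_pow_congr'
      show (2*n-1-(t:ℕ)-(2*n-1-(s:ℕ))+1) % 2 = ((s:ℕ)+(t:ℕ)+1) % 2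
      omega
    · rw [dif_neg hts,
        dif_neg (show ¬ (((rev s : Fin (2*n))):ℕ) ≤ (((rev t : Fin (2*n))):ℕ) by
          show ¬ (2*n-1-(s:ℕ) ≤ 2*n-1-(t:ℕ)); omega), mul_zero]

lemma toA_mem (n : ℕ) (hn : 1 ≤ n) (X : ZMod (2*n) → Matrix (Fin (2*n)) (Fin (2*n)) ℂ)
    (hX : X ∈ sympLie n) : toA n hn X ∈ Ssub n := by
  obtain ⟨h1, h2⟩ := hX
  rw [mem_Ssub_iff]
  intro j r
  have hr := r.2
  show X j r ⟨0, by omega⟩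
    = (-1:ℂ)^((r:ℕ)+1) * X (((r:ℕ) : ZMod (2*n)) + 1 - j) r ⟨0, by omega⟩
  have he := congrFun (congrFun (h2 j) r) ⟨0, by omega⟩
  rw [conjOmega_entry] at he
  have hrev0 : (rev (⟨0, by omega⟩ : Fin (2*n)) : Fin (2*n)) = ⟨2*n-1, by omega⟩ := by
    apply Fin.ext
    show 2*n-1-0 = 2*n-1
    omega
  have hrevr : (rev r : Fin (2*n)) = ⟨2*n-1-(r:ℕ), by omega⟩ := rfl
  rw [hrev0, hrevr] at he
  have hf := (fund X h1 (-j) ⟨2*n-1, by omega⟩ ⟨2*n-1-(r:ℕ), by omega⟩).trans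
    (dif_pos (show 2*n-1-(r:ℕ) ≤ 2*n-1 by omega))
  rw [hf] at he
  have harg : (-j - (((2*n-1-(r:ℕ) : ℕ)) : ZMod (2*n)))
      = ((r:ℕ) : ZMod (2*n)) + 1 - j := by
    rw [cast_revval r]
    ring
  rw [he]
  congr 1
  congr 1
  exact Fin.ext (show 2*n-1-(2*n-1-(r:ℕ)) = (r:ℕ) by omega)

lemma right_inv_AA (n : ℕ) (hn : 1 ≤ n) (a : Amod n) : toA n hn (fromA n a) = a := by
  funext p
  obtain ⟨j, r⟩ := p
  rw [toA_apply, fromA_apply, dif_pos (Nat.zero_le ((r:ℕ)))]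
  congr 1
  have h0 : (((⟨0, by omega⟩ : Fin (2*n)):ℕ) : ZMod (2*n)) = 0 := by
    show ((0:ℕ) : ZMod (2*n)) = 0; simp
  rw [Prod.mk.injEq]
  constructor
  · rw [h0]; ring
  · apply Fin.ext
    show (r:ℕ) - 0 = (r:ℕ)
    omega

lemma left_inv_AA (n : ℕ) (hn : 1 ≤ n) (X : ZMod (2*n) → Matrix (Fin (2*n)) (Fin (2*n)) ℂ)
    (hX : X ∈ sympLie n) : fromA n (toA n hn X) = X := by
  obtain ⟨h1, _⟩ := hX
  funext i
  ext s t
  rw [fromA_apply]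
  rw [fund X h1 i s t]
  rfl

end Aux

/-- the Lie algebra of G^{sp} has dimension 2n² + n over ℂ. -/
theorem statement14 (n : ℕ) (hn : 1 ≤ n) :
    Module.finrank ℂ (sympLie n) = 2*n^2 + n := by
  have e : (sympLie n) ≃ₗ[ℂ] (Ssub n) :=
    LinearEquiv.ofLinear
      ((toA n hn).restrict (fun X hX => toA_mem n hn X hX))
      ((fromA n).restrict (fun a ha => fromA_mem n a ha))
      (by
        apply LinearMap.ext
        intro a
        apply Subtype.ext
        exact right_inv_AA n hn a.1)
      (by
        apply LinearMap.ext
        intro X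
        apply Subtype.ext
        exact left_inv_AA n hn X.1 X.2)
  rw [LinearEquiv.finrank_eq e]
  exact finrank_Ssub n hn
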